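/- In the shifted Yangian Y_π(gl_n), the series a_i(u) and c_i(u) satisfy the relation (u-v)[a_i(u), c_i(v)] = c_i(u)a_i(v) - c_i(v)a_i(u), as an identity of formal series in u^{-1} and v^{-1}. -/

import Mathlib

open scoped Classical
open PowerSeries

noncomputable section

/-- The shifted Yangian `Y_π(gl_n)` presentation: a ring `A` together with elements
`d i r`, `d' i r`, `e i r`, `f i r` satisfying the Brundan–Kleshchev defining relations
for the pyramid `π = (p 1 ≤ ⋯ ≤ p n)`.  (`d i 0 = 1`, `e i r = 0` below the admissible
range, `f i 0 = 0`.) -/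
structure ShiftedYangian (A : Type) [Ring A] (n : ℕ) (p : ℕ → ℕ) where
  d : ℕ → ℕ → A
  d' : ℕ → ℕ → A
  e : ℕ → ℕ → A
  f : ℕ → ℕ → A
  d_zero : ∀ i, d i 0 = 1
  d'_zero : ∀ i, d' i 0 = 1
  e_zero : ∀ i r, r < p (i+1) - p i + 1 → e i r = 0
  f_zero : ∀ i, f i 0 = 0
  d_inv : ∀ i r, 1 ≤ i → i ≤ n →
    (∑ t ∈ Finset.range (r+1), d i t * d' i (r - t)) = if r = 0 then 1 else 0
  rel_dd : ∀ i j r s, ⁅d i r, d j s⁆ = 0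
  rel_ef : ∀ i j r s, 1 ≤ i → i ≤ n - 1 → 1 ≤ j → j ≤ n - 1 →
    p (i+1) - p i + 1 ≤ r → 1 ≤ s →
    ⁅e i r, f j s⁆ =
      if i = j then -(∑ t ∈ Finset.range (r+s), d' i t * d (i+1) (r+s-1-t)) else 0
  rel_de : ∀ i j r s, 1 ≤ i → i ≤ n → 1 ≤ j → j ≤ n - 1 → 1 ≤ r →
    p (j+1) - p j + 1 ≤ s →
    ⁅d i r, e j s⁆ =
      ((if i = j then (1:ℤ) else 0) - (if i = j + 1 then 1 else 0)) •
        ∑ t ∈ Finset.range r, d i t * e j (r+s-1-t)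
  rel_df : ∀ i j r s, 1 ≤ i → i ≤ n → 1 ≤ j → j ≤ n - 1 → 1 ≤ r → 1 ≤ s →
    ⁅d i r, f j s⁆ =
      ((if i = j + 1 then (1:ℤ) else 0) - (if i = j then 1 else 0)) •
        ∑ t ∈ Finset.range r, f j (r+s-1-t) * d i t
  rel_ee : ∀ i r s, 1 ≤ i → i ≤ n - 1 →
    p (i+1) - p i + 1 ≤ r → p (i+1) - p i + 1 ≤ s →
    ⁅e i r, e i (s+1)⁆ - ⁅e i (r+1), e i s⁆ = e i r * e i s + e i s * e i r
  rel_ff : ∀ i r s, 1 ≤ i → i ≤ n - 1 → 1 ≤ r → 1 ≤ s →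
    ⁅f i (r+1), f i s⁆ - ⁅f i r, f i (s+1)⁆ = f i r * f i s + f i s * f i r
  rel_ee1 : ∀ i r s, 1 ≤ i → i + 1 ≤ n - 1 →
    p (i+1) - p i + 1 ≤ r → p (i+2) - p (i+1) + 1 ≤ s →
    ⁅e i r, e (i+1) (s+1)⁆ - ⁅e i (r+1), e (i+1) s⁆ = -(e i r * e (i+1) s)
  rel_ff1 : ∀ i r s, 1 ≤ i → i + 1 ≤ n - 1 → 1 ≤ r → 1 ≤ s →
    ⁅f i (r+1), f (i+1) s⁆ - ⁅f i r, f (i+1) (s+1)⁆ = -(f (i+1) s * f i r)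
  rel_ee2 : ∀ i j r s, 1 ≤ i → i ≤ n - 1 → 1 ≤ j → j ≤ n - 1 →
    (i + 1 < j ∨ j + 1 < i) →
    p (i+1) - p i + 1 ≤ r → p (j+1) - p j + 1 ≤ s → ⁅e i r, e j s⁆ = 0
  rel_ff2 : ∀ i j r s, 1 ≤ i → i ≤ n - 1 → 1 ≤ j → j ≤ n - 1 →
    (i + 1 < j ∨ j + 1 < i) → 1 ≤ r → 1 ≤ s → ⁅f i r, f j s⁆ = 0
  serre_e : ∀ i j r s t, 1 ≤ i → i ≤ n - 1 → 1 ≤ j → j ≤ n - 1 →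
    (i = j + 1 ∨ j = i + 1) →
    p (i+1) - p i + 1 ≤ r → p (i+1) - p i + 1 ≤ s → p (j+1) - p j + 1 ≤ t →
    ⁅e i r, ⁅e i s, e j t⁆⁆ + ⁅e i s, ⁅e i r, e j t⁆⁆ = 0
  serre_f : ∀ i j r s t, 1 ≤ i → i ≤ n - 1 → 1 ≤ j → j ≤ n - 1 →
    (i = j + 1 ∨ j = i + 1) → 1 ≤ r → 1 ≤ s → 1 ≤ t →
    ⁅f i r, ⁅f i s, f j t⁆⁆ + ⁅f i s, ⁅f i r, f j t⁆⁆ = 0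

variable {A : Type} [Ring A]

/-- The re-expansion of `g(u - c)` as a formal series in `u⁻¹`, where `g` is regarded as a
series in `u⁻¹` (the coefficient of `u⁻ʲ` in `(u-c)⁻ʳ` is `C(j-1, r-1) cʲ⁻ʳ`). -/
def shiftSeries (c : ℤ) (g : PowerSeries A) : PowerSeries A :=
  PowerSeries.mk fun j => if j = 0 then PowerSeries.coeff 0 g else
    ∑ r ∈ Finset.Icc 1 j,
      ((j-1).choose (r-1) : A) * (c : A)^(j-r) * PowerSeries.coeff r g

/-- Coefficient function indexed by `ℤ` (zero in negative degrees). -/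
def zcoeff (j : ℤ) (g : PowerSeries A) : A :=
  if h : 0 ≤ j then PowerSeries.coeff j.toNat g else 0

namespace YangAux


lemma sum_lie' {ι : Type} (s : Finset ι) (f : ι → A) (y : A) :
    ⁅∑ i ∈ s, f i, y⁆ = ∑ i ∈ s, ⁅f i, y⁆ := by
  simp [Ring.lie_def, Finset.sum_mul, Finset.mul_sum, Finset.sum_sub_distrib]

lemma lie_sum' {ι : Type} (s : Finset ι) (x : A) (f : ι → A) :
    ⁅x, ∑ i ∈ s, f i⁆ = ∑ i ∈ s, ⁅x, f i⁆ := by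
  simp [Ring.lie_def, Finset.sum_mul, Finset.mul_sum, Finset.sum_sub_distrib]

lemma one_lie' (x : A) : ⁅(1:A), x⁆ = 0 := by simp [Ring.lie_def]

lemma intCast_mul_lie (z : ℤ) (x y : A) : ⁅(z : A) * x, y⁆ = (z : A) * ⁅x, y⁆ := by
  rw [Ring.lie_def, Ring.lie_def, mul_sub, mul_assoc, ← mul_assoc y,
    ← (Int.cast_commute z y).eq, mul_assoc]

lemma lie_intCast_mul (z : ℤ) (x y : A) : ⁅x, (z : A) * y⁆ = (z : A) * ⁅x, y⁆ := by
  rw [Ring.lie_def, Ring.lie_def, mul_sub, ← mul_assoc x, ← (Int.cast_commute z x).eq,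
    mul_assoc, mul_assoc]

lemma lie_mul_left {x z : A} (h : Commute x z) (y : A) : ⁅x * y, z⁆ = x * ⁅y, z⁆ := by
  rw [Ring.lie_def, Ring.lie_def, mul_sub, mul_assoc, ← mul_assoc z, ← h.eq, mul_assoc]

lemma lie_mul_right {x z : A} (h : Commute x z) (y : A) : ⁅x, y * z⁆ = ⁅x, y⁆ * z := by
  rw [Ring.lie_def, Ring.lie_def, sub_mul, mul_assoc, mul_assoc, ← h.eq, ← mul_assoc,
    ← mul_assoc]

lemma choose_conv (n : ℕ) : ∀ a b : ℕ,
    ∑ k ∈ Finset.range (n+1), Nat.choose k a * Nat.choose (n-k) b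
      = Nat.choose (n+1) (a+b+1) := by
  induction n with
  | zero =>
    intro a b
    rcases a with _ | a <;> rcases b with _ | b <;> simp <;>
      exact (Nat.choose_eq_zero_of_lt (by omega)).symm
  | succ n ih =>
    intro a b
    rw [Finset.sum_range_succ]
    cases b with
    | zero =>
      have h1 : ∑ k ∈ Finset.range (n+1), Nat.choose k a * Nat.choose (n+1-k) 0
          = (n+1).choose (a+1) := by
        simpa using ih a 0
      rw [h1, Nat.choose_succ_succ (n+1) a]
      simp [Nat.add_comm]
    | succ b =>
      have key : ∀ k ∈ Finset.range (n+1), Nat.choose k a * Nat.choose (n+1-k) (b+1)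
          = Nat.choose k a * Nat.choose (n-k) b + Nat.choose k a * Nat.choose (n-k) (b+1) := by
        intro k hk
        have hk' : k ≤ n := by simp at hk; omega
        have h2 : n+1-k = (n-k)+1 := by omega
        rw [h2, Nat.choose_succ_succ, Nat.mul_add]
      rw [Finset.sum_congr rfl key, Finset.sum_add_distrib, ih a b, ih a (b+1)]
      have : a + (b+1) + 1 = (a+b+1)+1 := by omega
      rw [this, Nat.choose_succ_succ (n+1) (a+b+1)]
      simp [Nat.choose_succ_succ]

/-- The coefficient of `g_t` in the degree-`j` coefficient of `shiftSeries c g`. -/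
def kz (c : ℤ) (j t : ℕ) : ℤ :=
  if j = 0 then (if t = 0 then 1 else 0)
  else if t = 0 then 0 else ((j-1).choose (t-1) : ℤ) * c^(j-t)

lemma kz_zero_left (c : ℤ) (t : ℕ) : kz c 0 t = if t = 0 then 1 else 0 := by simp [kz]

lemma kz_zero_right (c : ℤ) (j : ℕ) : kz c j 0 = if j = 0 then 1 else 0 := by
  cases j <;> simp [kz]

lemma kz_succ_zero (c : ℤ) (j : ℕ) : kz c (j+1) 0 = 0 := by simp [kz]

lemma kz_eq_zero {c : ℤ} {j t : ℕ} (h : j < t) : kz c j t = 0 := by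
  have ht : t ≠ 0 := by omega
  rcases Nat.eq_zero_or_pos j with hj | hj
  · subst hj; simp [kz, ht]
  · have hj0 : j ≠ 0 := by omega
    have : (j-1).choose (t-1) = 0 := Nat.choose_eq_zero_of_lt (by omega)
    simp [kz, hj0, ht, this]

lemma kz_succ_succ (c : ℤ) (j t : ℕ) :
    kz c (j+1) (t+1) = kz c j t + c * kz c j (t+1) := by
  cases j with
  | zero =>
    cases t <;> simp [kz]
  | succ j =>
    cases t with
    | zero =>
      simp [kz, pow_succ, mul_comm]
    | succ t =>
      by_cases h : t + 1 ≤ j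
      · have e1 : (j+1+1) - (t+1+1) = j - t := by omega
        have e2 : (j+1) - (t+1) = j - t := by omega
        have e3 : (j+1) - (t+1+1) = j - t - 1 := by omega
        have e4 : j - t = (j - t - 1) + 1 := by omega
        simp only [kz, Nat.succ_ne_zero, if_false, Nat.add_sub_cancel, e1, e2, e3]
        rw [Nat.choose_succ_succ j t, e4]
        push_cast
        ring
      · have h1 : j.choose (t+1) = 0 := Nat.choose_eq_zero_of_lt (by omega)
        have h2 : j.choose t + j.choose (t+1) = (j+1).choose (t+1) :=
          (Nat.choose_succ_succ j t).symm
        have e1 : (j+1+1) - (t+1+1) = j - t := by omega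
        have e2 : (j+1) - (t+1) = j - t := by omega
        simp only [kz, Nat.succ_ne_zero, if_false, Nat.add_sub_cancel, e1, e2, h1,
          ← h2]
        push_cast [h1]
        ring

lemma kz_conv (c : ℤ) (j t u : ℕ) :
    ∑ a ∈ Finset.range (j+1), kz c a t * kz c (j-a) u = kz c j (t+u) := by
  cases t with
  | zero =>
    rw [Finset.sum_eq_single_of_mem 0 (Finset.mem_range.mpr (by omega))]
    · simp [kz_zero_left]
    · intro a _ ha
      rw [kz_zero_right, if_neg ha, zero_mul]
  | succ t =>
    cases u with
    | zero =>
      rw [Finset.sum_eq_single_of_mem j (Finset.mem_range.mpr (by omega))]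
      · simp [kz_zero_right]
      · intro a ha hane
        have : j - a ≠ 0 := by simp at ha; omega
        rw [kz_zero_right, if_neg this, mul_zero]
    | succ u =>
      match j with
      | 0 => simp [kz]
      | 1 =>
        rw [Finset.sum_range_succ, Finset.sum_range_one]
        have h0 : kz c 0 (t+1) = 0 := by simp [kz]
        have h1 : kz c (1-1) (u+1) = 0 := by simp [kz]
        have h2 : kz c 1 (t+1+(u+1)) = 0 := by
          have hc : (0:ℕ).choose (t+1+u) = 0 := Nat.choose_eq_zero_of_lt (by omega)
          simp [kz, hc]
        rw [h0, h1, h2, zero_mul, mul_zero, add_zero]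
      | (n+2) =>
        rw [Finset.sum_range_succ', Finset.sum_range_succ]
        have h0 : kz c 0 (t+1) = 0 := by simp [kz]
        have htop : kz c ((n+2) - (n+1+1)) (u+1) = 0 := by simp [kz]
        rw [h0, zero_mul, add_zero, htop, mul_zero, add_zero]
        have key : ∀ a ∈ Finset.range (n+1),
            kz c (a+1) (t+1) * kz c ((n+2) - (a+1)) (u+1)
              = ((a.choose t : ℤ) * ((n-a).choose u : ℤ)) * c^(n-t-u) := by
          intro a ha
          have ha' : a ≤ n := by simp at ha; omega
          have e1 : (n+2) - (a+1) = (n-a)+1 := by omega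
          have e2 : (a+1) - (t+1) = a - t := by omega
          have e3 : ((n-a)+1) - (u+1) = n - a - u := by omega
          simp only [kz, Nat.succ_ne_zero, if_false, Nat.add_sub_cancel, e1, e2, e3]
          by_cases h : t ≤ a ∧ u ≤ n - a
          · have hpow : c^(a-t) * c^(n-a-u) = c^(n-t-u) := by
              rw [← pow_add]; congr 1; omega
            calc (a.choose t : ℤ) * c^(a-t) * ((n-a).choose u * c^(n-a-u))
                = ((a.choose t : ℤ) * ((n-a).choose u)) * (c^(a-t) * c^(n-a-u)) := by ring
              _ = _ := by rw [hpow]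
          · rcases not_and_or.mp h with h | h
            · have : a.choose t = 0 := Nat.choose_eq_zero_of_lt (by omega)
              simp [this]
            · have : (n-a).choose u = 0 := Nat.choose_eq_zero_of_lt (by omega)
              simp [this]
        rw [Finset.sum_congr rfl key, ← Finset.sum_mul]
        have hcc : ∑ a ∈ Finset.range (n+1), ((a.choose t : ℤ) * ((n-a).choose u : ℤ))
            = ((n+1).choose (t+u+1) : ℤ) := by
          rw [← choose_conv n t u]
          push_cast
          rfl
        rw [hcc]
        have hne : t+1+(u+1) ≠ 0 := by omega
        have e4 : (n+2) - 1 = n+1 := by omega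
        have e5 : (t+1+(u+1)) - 1 = t+u+1 := by omega
        have e6 : (n+2) - (t+1+(u+1)) = n-t-u := by omega
        simp only [kz, Nat.succ_ne_zero, if_false, hne, e4, e5, e6]


lemma coeff_mul' (g h : PowerSeries A) (k : ℕ) :
    PowerSeries.coeff k (g*h)
      = ∑ t ∈ Finset.range (k+1), PowerSeries.coeff t g * PowerSeries.coeff (k-t) h := by
  rw [PowerSeries.coeff_mul, Finset.Nat.sum_antidiagonal_eq_sum_range_succ_mk]

lemma coeff_shiftSeries (c : ℤ) (g : PowerSeries A) (j : ℕ) :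
    PowerSeries.coeff j (shiftSeries c g)
      = ∑ t ∈ Finset.range (j+1), (kz c j t : A) * PowerSeries.coeff t g := by
  rw [shiftSeries, PowerSeries.coeff_mk]
  cases j with
  | zero => simp [kz]
  | succ j =>
    rw [if_neg (Nat.succ_ne_zero j), Finset.sum_range_succ']
    have h0 : (kz c (j+1) 0 : A) = 0 := by simp [kz]
    rw [h0, zero_mul, add_zero]
    have : Finset.Icc 1 (j+1) = Finset.Ico 1 (j+2) := by
      rw [← Finset.Ico_add_one_right_eq_Icc]; rfl
    rw [this, Finset.sum_Ico_eq_sum_range]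
    apply Finset.sum_congr (by norm_num)
    intro t _
    have e1 : 1 + t - 1 = t := by omega
    have e2 : (j+1) - (1+t) = j - t := by omega
    have e3 : kz c (j+1) (t+1) = ((j.choose t : ℤ)) * c^(j-t) := by
      simp [kz]
    rw [e1, e2, e3]
    push_cast
    ring

lemma constantCoeff_shiftSeries (c : ℤ) (g : PowerSeries A) :
    PowerSeries.constantCoeff (shiftSeries c g) = PowerSeries.constantCoeff g := by
  have := coeff_shiftSeries c g 0
  simp only [PowerSeries.coeff_zero_eq_constantCoeff] at this
  simpa [kz] using this

lemma shiftSeries_mul (c : ℤ) (g h : PowerSeries A) :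
    shiftSeries c (g * h) = shiftSeries c g * shiftSeries c h := by
  ext j
  rw [coeff_shiftSeries, coeff_mul']
  have lhs_eq : ∑ m ∈ Finset.range (j+1), (kz c j m : A) * PowerSeries.coeff m (g*h)
      = ∑ t ∈ Finset.range (j+1), ∑ u ∈ Finset.range (j+1), (kz c j (t+u) : A)
          * (PowerSeries.coeff t g * PowerSeries.coeff u h) := by
    calc ∑ m ∈ Finset.range (j+1), (kz c j m : A) * PowerSeries.coeff m (g*h)
        = ∑ m ∈ Finset.Ico 0 (j+1), ∑ t ∈ Finset.Ico 0 (m+1), (kz c j m : A)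
            * (PowerSeries.coeff t g * PowerSeries.coeff (m-t) h) := by
          rw [← Finset.range_eq_Ico]
          refine Finset.sum_congr rfl (fun m _ => ?_)
          rw [coeff_mul', Finset.mul_sum, Finset.range_eq_Ico]
      _ = ∑ t ∈ Finset.Ico 0 (j+1), ∑ m ∈ Finset.Ico t (j+1), (kz c j m : A)
            * (PowerSeries.coeff t g * PowerSeries.coeff (m-t) h) :=
          (Finset.sum_Ico_Ico_comm 0 (j+1) _).symm
      _ = ∑ t ∈ Finset.range (j+1), ∑ u ∈ Finset.range (j+1), (kz c j (t+u) : A)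
            * (PowerSeries.coeff t g * PowerSeries.coeff u h) := by
          rw [← Finset.range_eq_Ico]
          refine Finset.sum_congr rfl (fun t ht => ?_)
          have ht' : t ≤ j := by simp at ht; omega
          rw [Finset.sum_Ico_eq_sum_range]
          have e0 : j + 1 - t = (j - t) + 1 := by omega
          rw [e0]
          have estep : ∀ k ∈ Finset.range (j - t + 1),
              (kz c j (t+k) : A) * (PowerSeries.coeff t g
                  * PowerSeries.coeff (t+k-t) h)
              = (kz c j (t+k) : A) * (PowerSeries.coeff t g
                  * PowerSeries.coeff k h) := by
            intro k _
            have : t + k - t = k := by omega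
            rw [this]
          rw [Finset.sum_congr rfl estep]
          refine Finset.sum_subset (Finset.range_subset_range.mpr (by omega)) ?_
          intro u _ hu
          have : j < t + u := by simp at hu; omega
          rw [kz_eq_zero this]
          simp
  rw [lhs_eq]
  have rhs_eq : ∀ a ∈ Finset.range (j+1), PowerSeries.coeff a (shiftSeries c g)
        * PowerSeries.coeff (j-a) (shiftSeries c h)
      = ∑ t ∈ Finset.range (j+1), ∑ u ∈ Finset.range (j+1),
          (kz c a t : A) * (kz c (j-a) u : A)
          * (PowerSeries.coeff t g * PowerSeries.coeff u h) := by
    intro a ha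
    have ha' : a ≤ j := by simp at ha; omega
    have hg : PowerSeries.coeff a (shiftSeries c g)
        = ∑ t ∈ Finset.range (j+1), (kz c a t : A) * PowerSeries.coeff t g := by
      rw [coeff_shiftSeries]
      exact Finset.sum_subset (Finset.range_subset_range.mpr (by omega))
        (fun t _ ht => by rw [kz_eq_zero (by simp at ht; omega : a < t)]; simp)
    have hh : PowerSeries.coeff (j-a) (shiftSeries c h)
        = ∑ u ∈ Finset.range (j+1), (kz c (j-a) u : A) * PowerSeries.coeff u h := by
      rw [coeff_shiftSeries]
      exact Finset.sum_subset (Finset.range_subset_range.mpr (by omega))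
        (fun u _ hu => by rw [kz_eq_zero (by simp at hu; omega : j - a < u)]; simp)
    rw [hg, hh, Finset.sum_mul_sum]
    refine Finset.sum_congr rfl (fun t _ => Finset.sum_congr rfl (fun u _ => ?_))
    rw [mul_assoc, ← mul_assoc (PowerSeries.coeff t g),
      (Int.cast_commute (kz c (j-a) u) (PowerSeries.coeff t g)).symm.eq,
      ← mul_assoc, ← mul_assoc, mul_assoc ((kz c a t : A) * _)]
  rw [Finset.sum_congr rfl rhs_eq]
  symm
  calc ∑ a ∈ Finset.range (j+1), ∑ t ∈ Finset.range (j+1), ∑ u ∈ Finset.range (j+1),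
          (kz c a t : A) * (kz c (j-a) u : A)
          * (PowerSeries.coeff t g * PowerSeries.coeff u h)
      = ∑ t ∈ Finset.range (j+1), ∑ a ∈ Finset.range (j+1), ∑ u ∈ Finset.range (j+1),
          (kz c a t : A) * (kz c (j-a) u : A)
          * (PowerSeries.coeff t g * PowerSeries.coeff u h) := Finset.sum_comm
    _ = ∑ t ∈ Finset.range (j+1), ∑ u ∈ Finset.range (j+1), ∑ a ∈ Finset.range (j+1),
          (kz c a t : A) * (kz c (j-a) u : A)
          * (PowerSeries.coeff t g * PowerSeries.coeff u h) :=
        Finset.sum_congr rfl (fun t _ => Finset.sum_comm)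
    _ = ∑ t ∈ Finset.range (j+1), ∑ u ∈ Finset.range (j+1), (kz c j (t+u) : A)
          * (PowerSeries.coeff t g * PowerSeries.coeff u h) := by
        refine Finset.sum_congr rfl (fun t _ => Finset.sum_congr rfl (fun u _ => ?_))
        rw [← Finset.sum_mul]
        have hsum : (∑ a ∈ Finset.range (j+1), (kz c a t : A) * (kz c (j-a) u : A))
            = ((kz c j (t+u) : ℤ) : A) := by
          rw [← kz_conv c j t u]
          push_cast
          rfl
        rw [hsum]



lemma cast_mul_left_comm (z w : ℤ) (x : A) :
    (z : A) * ((w : A) * x) = (w : A) * ((z : A) * x) := by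
  rw [← mul_assoc, ← mul_assoc, (Int.cast_commute z ((w : ℤ) : A)).eq]

lemma mul_cast_left (z : ℤ) (x y : A) : x * ((z : A) * y) = (z : A) * (x * y) := by
  rw [← mul_assoc, ← (Int.cast_commute z x).eq, mul_assoc]

/-- Abstract form of the shifted commutation relation: if families `D`, `F` satisfy the
`K0`-relation, then so do their `kz`-shifts (with the same shift `c`). -/
lemma shifted_rel (c : ℤ) (D F Z : ℕ → A)
    (hD0 : D 0 = 1) (hF0 : F 0 = 0)
    (hK : ∀ a b, ⁅D (a+1), F b⁆ - ⁅D a, F (b+1)⁆ = (if b = 0 then Z a else 0) - F b * D a)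
    (r s : ℕ) :
    (⁅∑ a ∈ Finset.range (r+1+1), (kz c (r+1) a : A) * D a,
      ∑ b ∈ Finset.range (s+1), (kz c s b : A) * F b⁆
    - ⁅∑ a ∈ Finset.range (r+1), (kz c r a : A) * D a,
      ∑ b ∈ Finset.range (s+1+1), (kz c (s+1) b : A) * F b⁆)
    = (if s = 0 then ∑ a ∈ Finset.range (r+1), (kz c r a : A) * Z a else 0)
      - (∑ b ∈ Finset.range (s+1), (kz c s b : A) * F b)
        * (∑ a ∈ Finset.range (r+1), (kz c r a : A) * D a) := by
  have expand : ∀ (I J : Finset ℕ) (φ ψ : ℕ → ℤ),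
      ⁅∑ a ∈ I, (φ a : A) * D a, ∑ b ∈ J, (ψ b : A) * F b⁆
      = ∑ a ∈ I, ∑ b ∈ J, (φ a : A) * ((ψ b : A) * ⁅D a, F b⁆) := by
    intro I J φ ψ
    rw [sum_lie']
    refine Finset.sum_congr rfl fun a _ => ?_
    rw [intCast_mul_lie, lie_sum', Finset.mul_sum]
    refine Finset.sum_congr rfl fun b _ => ?_
    rw [lie_intCast_mul]
  rw [expand, expand]
  have peelA : ∑ a ∈ Finset.range (r+1+1), ∑ b ∈ Finset.range (s+1),
        (kz c (r+1) a : A) * ((kz c s b : A) * ⁅D a, F b⁆)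
      = (∑ a ∈ Finset.range (r+1), ∑ b ∈ Finset.range (s+1),
          (kz c r a : A) * ((kz c s b : A) * ⁅D (a+1), F b⁆))
        + (c : A) * ∑ a ∈ Finset.range (r+1), ∑ b ∈ Finset.range (s+1),
          (kz c r (a+1) : A) * ((kz c s b : A) * ⁅D (a+1), F b⁆) := by
    rw [Finset.sum_range_succ']
    have h0 : (∑ b ∈ Finset.range (s+1),
        (kz c (r+1) 0 : A) * ((kz c s b : A) * ⁅D 0, F b⁆)) = 0 :=
      Finset.sum_eq_zero fun b _ => by rw [kz_succ_zero]; simp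
    rw [h0, add_zero, Finset.mul_sum, ← Finset.sum_add_distrib]
    refine Finset.sum_congr rfl fun a _ => ?_
    rw [Finset.mul_sum, ← Finset.sum_add_distrib]
    refine Finset.sum_congr rfl fun b _ => ?_
    have hcast : ((kz c (r+1) (a+1) : ℤ) : A)
        = (kz c r a : A) + (c : A) * (kz c r (a+1) : A) := by
      rw [kz_succ_succ]; push_cast; ring_nf
    rw [hcast, add_mul, mul_assoc]
  have peelB : ∑ a ∈ Finset.range (r+1), ∑ b ∈ Finset.range (s+1+1),
        (kz c r a : A) * ((kz c (s+1) b : A) * ⁅D a, F b⁆)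
      = (∑ a ∈ Finset.range (r+1), ∑ b ∈ Finset.range (s+1),
          (kz c r a : A) * ((kz c s b : A) * ⁅D a, F (b+1)⁆))
        + (c : A) * ∑ a ∈ Finset.range (r+1), ∑ b ∈ Finset.range (s+1),
          (kz c r a : A) * ((kz c s (b+1) : A) * ⁅D a, F (b+1)⁆) := by
    rw [Finset.mul_sum, ← Finset.sum_add_distrib]
    refine Finset.sum_congr rfl fun a _ => ?_
    rw [Finset.sum_range_succ']
    have h0 : (kz c r a : A) * ((kz c (s+1) 0 : A) * ⁅D a, F 0⁆) = 0 := by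
      rw [kz_succ_zero]; simp
    rw [h0, add_zero, Finset.mul_sum, ← Finset.sum_add_distrib]
    refine Finset.sum_congr rfl fun b _ => ?_
    have hcast : ((kz c (s+1) (b+1) : ℤ) : A)
        = (kz c s b : A) + (c : A) * (kz c s (b+1) : A) := by
      rw [kz_succ_succ]; push_cast; ring_nf
    rw [hcast, add_mul, mul_add]
    congr 1
    rw [mul_assoc ((c:A)), cast_mul_left_comm]
  rw [peelA, peelB]
  -- the two `c`-multiplied sums agree
  have hW1 : (∑ a ∈ Finset.range (r+1), ∑ b ∈ Finset.range (s+1),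
        (kz c r (a+1) : A) * ((kz c s b : A) * ⁅D (a+1), F b⁆))
      = ∑ a ∈ Finset.range (r+1), ∑ b ∈ Finset.range (s+1),
        (kz c r a : A) * ((kz c s b : A) * ⁅D a, F b⁆) := by
    have e1 := Finset.sum_range_succ' (fun a => ∑ b ∈ Finset.range (s+1),
      (kz c r a : A) * ((kz c s b : A) * ⁅D a, F b⁆)) (r+1)
    have e2 := Finset.sum_range_succ (fun a => ∑ b ∈ Finset.range (s+1),
      (kz c r a : A) * ((kz c s b : A) * ⁅D a, F b⁆)) (r+1)
    have hG0 : (∑ b ∈ Finset.range (s+1),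
        (kz c r 0 : A) * ((kz c s b : A) * ⁅D 0, F b⁆)) = 0 :=
      Finset.sum_eq_zero fun b _ => by rw [hD0, one_lie']; simp
    have hGtop : (∑ b ∈ Finset.range (s+1),
        (kz c r (r+1) : A) * ((kz c s b : A) * ⁅D (r+1), F b⁆)) = 0 :=
      Finset.sum_eq_zero fun b _ => by rw [kz_eq_zero (Nat.lt_succ_self r)]; simp
    rw [hG0, add_zero] at e1
    rw [hGtop, add_zero] at e2
    rw [← e1, e2]
  have hW2 : (∑ a ∈ Finset.range (r+1), ∑ b ∈ Finset.range (s+1),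
        (kz c r a : A) * ((kz c s (b+1) : A) * ⁅D a, F (b+1)⁆))
      = ∑ a ∈ Finset.range (r+1), ∑ b ∈ Finset.range (s+1),
        (kz c r a : A) * ((kz c s b : A) * ⁅D a, F b⁆) := by
    refine Finset.sum_congr rfl fun a _ => ?_
    have e1 := Finset.sum_range_succ' (fun b =>
      (kz c r a : A) * ((kz c s b : A) * ⁅D a, F b⁆)) (s+1)
    have e2 := Finset.sum_range_succ (fun b =>
      (kz c r a : A) * ((kz c s b : A) * ⁅D a, F b⁆)) (s+1)
    have hG0 : (kz c r a : A) * ((kz c s 0 : A) * ⁅D a, F 0⁆) = 0 := by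
      rw [hF0, (show ∀ x : A, ⁅x, (0:A)⁆ = 0 from fun x => by simp [Ring.lie_def])]; simp
    have hGtop : (kz c r a : A) * ((kz c s (s+1) : A) * ⁅D a, F (s+1)⁆) = 0 := by
      rw [kz_eq_zero (Nat.lt_succ_self s)]; simp
    rw [hG0, add_zero] at e1
    rw [hGtop, add_zero] at e2
    rw [← e1, e2]
  rw [hW1, hW2]
  have cancel : ∀ X Y W : A, (X + W) - (Y + W) = X - Y := by intro X Y W; abel
  rw [cancel]
  -- now the main computation
  rw [← Finset.sum_sub_distrib]
  have step : ∀ a ∈ Finset.range (r+1),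
      ((∑ b ∈ Finset.range (s+1), (kz c r a : A) * ((kz c s b : A) * ⁅D (a+1), F b⁆))
      - ∑ b ∈ Finset.range (s+1), (kz c r a : A) * ((kz c s b : A) * ⁅D a, F (b+1)⁆))
      = (if s = 0 then (kz c r a : A) * Z a else 0)
        - ∑ b ∈ Finset.range (s+1), (kz c r a : A) * ((kz c s b : A) * (F b * D a)) := by
    intro a _
    rw [← Finset.sum_sub_distrib]
    have inner : ∀ b ∈ Finset.range (s+1),
        (kz c r a : A) * ((kz c s b : A) * ⁅D (a+1), F b⁆)
        - (kz c r a : A) * ((kz c s b : A) * ⁅D a, F (b+1)⁆)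
        = (kz c r a : A) * ((kz c s b : A) * (if b = 0 then Z a else 0))
          - (kz c r a : A) * ((kz c s b : A) * (F b * D a)) := by
      intro b _
      rw [← mul_sub, ← mul_sub, hK a b, mul_sub, mul_sub]
    rw [Finset.sum_congr rfl inner, Finset.sum_sub_distrib]
    congr 1
    have e0 : ∀ b ∈ Finset.range (s+1),
        (kz c r a : A) * ((kz c s b : A) * (if b = 0 then Z a else 0))
        = if b = 0 then (kz c r a : A) * ((kz c s b : A) * Z a) else 0 := by
      intro b _
      by_cases hb : b = 0 <;> simp [hb]
    rw [Finset.sum_congr rfl e0,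
      Finset.sum_eq_single_of_mem 0 (Finset.mem_range.mpr (by omega))
        (fun b _ hb => by rw [if_neg hb])]
    rw [if_pos rfl, kz_zero_right]
    by_cases hs : s = 0 <;> simp [hs]
  rw [Finset.sum_congr rfl step, Finset.sum_sub_distrib]
  congr 1
  · by_cases hs : s = 0 <;> simp [hs]
  · rw [Finset.sum_mul_sum]
    refine (Finset.sum_comm.trans ?_)
    refine Finset.sum_congr rfl fun a _ => Finset.sum_congr rfl fun b _ => ?_
    have hpt : ∀ (zr zs : ℤ) (x y : A),
        (zr:A) * ((zs:A) * (x * y)) = (zs:A) * x * ((zr:A) * y) := by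
      intro zr zs x y
      rw [mul_assoc, cast_mul_left_comm]
      congr 1
      exact (mul_cast_left zr x y).symm
    exact hpt _ _ _ _

end YangAux


namespace ShiftedYangian

variable {n : ℕ} {p : ℕ → ℕ} (Y : ShiftedYangian A n p)

/-- The series `d_i(u) = 1 + Σ_{r≥1} d_i^{(r)} u⁻ʳ` (as a series in `u⁻¹`). -/
def dS (i : ℕ) : PowerSeries A := PowerSeries.mk (Y.d i)

/-- The series `e_i(u)`. -/
def eS (i : ℕ) : PowerSeries A := PowerSeries.mk (Y.e i)

/-- The series `f_i(u)`. -/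
def fS (i : ℕ) : PowerSeries A := PowerSeries.mk (Y.f i)

/-- `a_i(u) = d_1(u) d_2(u-1) ⋯ d_i(u-i+1)`. -/
def aS (i : ℕ) : PowerSeries A :=
  ((List.range i).map fun k : ℕ => shiftSeries (k : ℤ) (Y.dS (k+1))).prod

/-- `b_i(u) = a_i(u) e_i(u-i+1)`. -/
def bS (i : ℕ) : PowerSeries A := Y.aS i * shiftSeries ((i : ℤ) - 1) (Y.eS i)

/-- `c_i(u) = f_i(u-i+1) a_i(u)`. -/
def cS (i : ℕ) : PowerSeries A := shiftSeries ((i : ℤ) - 1) (Y.fS i) * Y.aS i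

end ShiftedYangian

/-- `p_1 + ⋯ + p_i`, the degree of the polynomial `A_i(u)`. -/
def degP (p : ℕ → ℕ) (i : ℕ) : ℕ := ∑ k ∈ Finset.range i, p (k+1)

/-- The series `u^{-(p_1+⋯+p_i)} · u^{p_1}(u-1)^{p_2}⋯(u-i+1)^{p_i}`, i.e.
`∏_{k=0}^{i-1} (1 - k u⁻¹)^{p_{k+1}}` as a series in `u⁻¹`. -/
def polyPre (p : ℕ → ℕ) (i : ℕ) : PowerSeries A :=
  ((List.range i).map fun k : ℕ =>
    ((1 : PowerSeries A) - PowerSeries.C (k : A) * PowerSeries.X) ^ (p (k+1))).prod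

/-- `∏_{k=0}^{i-1} (1 - (k+1) u⁻¹)^{p_{k+1}}`, the prefactor of `A_i(u-1)` divided by
`u^{p_1+⋯+p_i}`. -/
def polyPreSh (p : ℕ → ℕ) (i : ℕ) : PowerSeries A :=
  ((List.range i).map fun k : ℕ =>
    ((1 : PowerSeries A) - PowerSeries.C ((k : A) + 1) * PowerSeries.X) ^ (p (k+1))).prod

/-- The prefactor of `B_i(u)` divided by `u^{p_1+⋯+p_{i-1}+p_{i+1}}`:
`∏_{k=0}^{i-2} (1 - k u⁻¹)^{p_{k+1}} · (1 - (i-1) u⁻¹)^{p_{i+1}}`. -/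
def polyPreB (p : ℕ → ℕ) (i : ℕ) : PowerSeries A :=
  (((List.range (i-1)).map fun k : ℕ =>
    ((1 : PowerSeries A) - PowerSeries.C (k : A) * PowerSeries.X) ^ (p (k+1))).prod) *
    ((1 : PowerSeries A) - PowerSeries.C ((i : A) - 1) * PowerSeries.X) ^ (p (i+1))

namespace ShiftedYangian

variable {n : ℕ} {p : ℕ → ℕ} (Y : ShiftedYangian A n p)

/-- `u^{-(p_1+⋯+p_i)} A_i(u)`. -/
def alS (i : ℕ) : PowerSeries A := polyPre p i * Y.aS i

/-- `u^{-(p_1+⋯+p_{i-1}+p_{i+1})} B_i(u)`. -/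
def beS (i : ℕ) : PowerSeries A := polyPreB p i * Y.bS i

/-- `u^{-(p_1+⋯+p_i)} C_i(u)`. -/
def gaS (i : ℕ) : PowerSeries A := polyPre p i * Y.cS i

end ShiftedYangian

namespace YangAux

open ShiftedYangian

variable {n : ℕ} {p : ℕ → ℕ}

lemma coeff_dS (Y : ShiftedYangian A n p) (k r : ℕ) :
    PowerSeries.coeff r (Y.dS k) = Y.d k r := by
  rw [ShiftedYangian.dS, PowerSeries.coeff_mk]

lemma coeff_fS (Y : ShiftedYangian A n p) (k r : ℕ) :
    PowerSeries.coeff r (Y.fS k) = Y.f k r := by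
  rw [ShiftedYangian.fS, PowerSeries.coeff_mk]

lemma aS_zero (Y : ShiftedYangian A n p) : Y.aS 0 = 1 := by
  simp [ShiftedYangian.aS]

lemma aS_succ (Y : ShiftedYangian A n p) (j : ℕ) :
    Y.aS (j+1) = Y.aS j * shiftSeries (j : ℤ) (Y.dS (j+1)) := by
  rw [ShiftedYangian.aS, ShiftedYangian.aS, List.range_succ, List.map_append,
    List.prod_append, List.map_singleton, List.prod_singleton]

lemma d_commute (Y : ShiftedYangian A n p) (j k r s : ℕ) :
    Commute (Y.d j r) (Y.d k s) := by
  have h := Y.rel_dd j k r s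
  rw [Ring.lie_def, sub_eq_zero] at h
  exact h

/-- Generators `d k r` with `1 ≤ k ≤ j`. -/
def dSet (Y : ShiftedYangian A n p) (j : ℕ) : Set A :=
  {x | ∃ k r : ℕ, 1 ≤ k ∧ k ≤ j ∧ x = Y.d k r}

/-- All generators `d k r`. -/
def dSetAll (Y : ShiftedYangian A n p) : Set A := {x | ∃ k r : ℕ, x = Y.d k r}

lemma closure_commute (Y : ShiftedYangian A n p) {x y : A}
    (hx : x ∈ Subring.closure (dSetAll Y)) (hy : y ∈ Subring.closure (dSetAll Y)) :
    Commute x y := by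
  have h1 : Subring.closure (dSetAll Y) ≤ Subring.centralizer (dSetAll Y) := by
    rw [Subring.closure_le]
    rintro z ⟨k, r, rfl⟩
    rw [SetLike.mem_coe, Subring.mem_centralizer_iff]
    rintro g ⟨k', r', rfl⟩
    exact (d_commute Y k' k r' r).eq
  have h2 : ∀ g ∈ dSetAll Y, g * y = y * g := Subring.mem_centralizer_iff.mp (h1 hy)
  have h3 : Subring.closure (dSetAll Y) ≤ Subring.centralizer {y} := by
    rw [Subring.closure_le]
    intro z hz
    rw [SetLike.mem_coe, Subring.mem_centralizer_iff]
    intro g hg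
    rw [Set.mem_singleton_iff] at hg
    subst hg
    exact (h2 z hz).symm
  have h4 := Subring.mem_centralizer_iff.mp (h3 hx)
  exact (h4 y rfl).symm

lemma df_commute (Y : ShiftedYangian A n p) {m : ℕ} (hm : m + 1 ≤ n - 1)
    {j : ℕ} (hj1 : 1 ≤ j) (hj2 : j ≤ m) (r s : ℕ) :
    Commute (Y.d j r) (Y.f (m+1) s) := by
  have hn : m + 2 ≤ n := by omega
  rcases Nat.eq_zero_or_pos r with rfl | hr
  · rw [Y.d_zero]; exact Commute.one_left _
  rcases Nat.eq_zero_or_pos s with rfl | hs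
  · rw [Y.f_zero]; exact Commute.zero_right _
  have h := Y.rel_df j (m+1) r s hj1 (by omega) (by omega) hm hr hs
  rw [if_neg (by omega), if_neg (by omega), sub_zero, zero_smul] at h
  rw [Ring.lie_def, sub_eq_zero] at h
  exact h

lemma coeff_aS_mem (Y : ShiftedYangian A n p) (j t : ℕ) :
    PowerSeries.coeff t (Y.aS j) ∈ Subring.closure (dSet Y j) := by
  induction j generalizing t with
  | zero =>
    rw [aS_zero, PowerSeries.coeff_one]
    split
    · exact Subring.one_mem _
    · exact Subring.zero_mem _
  | succ j ih =>
    rw [aS_succ, coeff_mul']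
    refine Subring.sum_mem _ fun k _ => Subring.mul_mem _ ?_ ?_
    · refine Subring.closure_mono ?_ (ih k)
      rintro x ⟨k', r', h1, h2, h3⟩
      exact ⟨k', r', h1, by omega, h3⟩
    · rw [coeff_shiftSeries]
      refine Subring.sum_mem _ fun a _ => Subring.mul_mem _ (intCast_mem _ _) ?_
      rw [coeff_dS]
      exact Subring.subset_closure ⟨j+1, a, by omega, le_rfl, rfl⟩

lemma dSet_subset_all (Y : ShiftedYangian A n p) (j : ℕ) : dSet Y j ⊆ dSetAll Y := by
  rintro x ⟨k, r, _, _, h⟩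
  exact ⟨k, r, h⟩

lemma coeff_aS_mem_all (Y : ShiftedYangian A n p) (j t : ℕ) :
    PowerSeries.coeff t (Y.aS j) ∈ Subring.closure (dSetAll Y) :=
  Subring.closure_mono (dSet_subset_all Y j) (coeff_aS_mem Y j t)

lemma coeff_shiftD_mem (Y : ShiftedYangian A n p) (k r : ℕ) (c : ℤ) :
    PowerSeries.coeff r (shiftSeries c (Y.dS k)) ∈ Subring.closure (dSetAll Y) := by
  rw [coeff_shiftSeries]
  refine Subring.sum_mem _ fun a _ => Subring.mul_mem _ (intCast_mem _ _) ?_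
  rw [coeff_dS]
  exact Subring.subset_closure ⟨k, a, rfl⟩

lemma closure_commute_f (Y : ShiftedYangian A n p) {m : ℕ} (hm : m + 1 ≤ n - 1)
    (s : ℕ) {x : A} (hx : x ∈ Subring.closure (dSet Y m)) :
    Commute x (Y.f (m+1) s) := by
  refine Subring.closure_induction (p := fun z _ => Commute z (Y.f (m+1) s))
    ?_ ?_ ?_ ?_ ?_ ?_ hx
  · rintro z ⟨k, r, hk1, hk2, rfl⟩
    exact df_commute Y hm hk1 hk2 r s
  · exact Commute.zero_left _
  · exact Commute.one_left _
  · exact fun _ _ _ _ h1 h2 => h1.add_left h2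
  · exact fun _ _ h1 => h1.neg_left
  · exact fun _ _ _ _ h1 h2 => h1.mul_left h2

lemma commute_aS_Fsh (Y : ShiftedYangian A n p) {m : ℕ} (hm : m + 1 ≤ n - 1)
    (t a : ℕ) :
    Commute (PowerSeries.coeff t (Y.aS m))
      (PowerSeries.coeff a (shiftSeries (m : ℤ) (Y.fS (m+1)))) := by
  rw [coeff_shiftSeries]
  refine Commute.sum_right _ _ _ fun b _ => ?_
  rw [coeff_fS]
  exact ((Int.cast_commute (kz (m:ℤ) a b) _).symm).mul_right
    (closure_commute_f Y hm b (coeff_aS_mem Y m t))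

lemma series_comm {g h : PowerSeries A}
    (hc : ∀ a b : ℕ, Commute (PowerSeries.coeff a g) (PowerSeries.coeff b h)) :
    g * h = h * g := by
  ext k
  rw [coeff_mul', coeff_mul']
  rw [← Finset.sum_range_reflect
    (fun t => PowerSeries.coeff t g * PowerSeries.coeff (k-t) h) (k+1)]
  refine Finset.sum_congr rfl fun t ht => ?_
  have ht' : t ≤ k := by simp at ht; omega
  have e1 : k + 1 - 1 - t = k - t := by omega
  have e2 : k - (k - t) = t := by omega
  rw [e1, e2, (hc (k-t) t).eq]

lemma hdf (Y : ShiftedYangian A n p) {m : ℕ} (hm : m + 1 ≤ n - 1)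
    (r s : ℕ) (hr : 1 ≤ r) (hs : 1 ≤ s) :
    ⁅Y.d (m+1) r, Y.f (m+1) s⁆
      = -∑ t ∈ Finset.range r, Y.f (m+1) (r+s-1-t) * Y.d (m+1) t := by
  have h := Y.rel_df (m+1) (m+1) r s (by omega) (by omega) (by omega) hm hr hs
  rw [if_neg (by omega), if_pos rfl, zero_sub, neg_smul, one_smul] at h
  exact h

lemma K0 (Y : ShiftedYangian A n p) {m : ℕ} (hm : m + 1 ≤ n - 1) (r s : ℕ) :
    ⁅Y.d (m+1) (r+1), Y.f (m+1) s⁆ - ⁅Y.d (m+1) r, Y.f (m+1) (s+1)⁆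
      = (if s = 0 then ∑ t ∈ Finset.range (r+1), Y.f (m+1) t * Y.d (m+1) (r-t) else 0)
        - Y.f (m+1) s * Y.d (m+1) r := by
  rcases Nat.eq_zero_or_pos s with rfl | hs
  · rw [Y.f_zero, (show ∀ x : A, ⁅x, (0:A)⁆ = 0 from fun x => by simp [Ring.lie_def]), if_pos rfl, zero_mul, sub_zero, zero_sub]
    rcases Nat.eq_zero_or_pos r with rfl | hr
    · rw [Y.d_zero, one_lie', neg_zero, Finset.sum_range_one, Y.f_zero, zero_mul]
    · rw [hdf Y hm r 1 hr le_rfl, neg_neg,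
        Finset.sum_range_succ' (fun t => Y.f (m+1) t * Y.d (m+1) (r-t)) r,
        Y.f_zero, zero_mul, add_zero,
        ← Finset.sum_range_reflect (fun t => Y.f (m+1) (t+1) * Y.d (m+1) (r-(t+1))) r]
      refine Finset.sum_congr rfl fun t ht => ?_
      have ht' : t < r := Finset.mem_range.mp ht
      have e1 : r - 1 - t + 1 = r + 1 - 1 - t := by omega
      have e2 : r - (r + 1 - 1 - t) = t := by omega
      rw [e1, e2]
  · rw [if_neg (by omega)]
    rcases Nat.eq_zero_or_pos r with rfl | hr
    · rw [Y.d_zero, one_lie', sub_zero, hdf Y hm 1 s le_rfl hs,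
        Finset.sum_range_one, zero_sub, Y.d_zero]
      have e1 : 1 + s - 1 - 0 = s := by omega
      rw [e1]
    · rw [hdf Y hm (r+1) s (by omega) hs, hdf Y hm r (s+1) hr (by omega),
        Finset.sum_range_succ]
      have e1 : r + 1 + s - 1 - r = s := by omega
      rw [e1]
      have e2 : ∀ t ∈ Finset.range r, Y.f (m+1) (r+1+s-1-t) * Y.d (m+1) t
          = Y.f (m+1) (r+(s+1)-1-t) * Y.d (m+1) t := by
        intro t ht
        have : r+1+s-1-t = r+(s+1)-1-t := by omega
        rw [this]
      rw [Finset.sum_congr rfl e2]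
      abel

lemma Kprime (Y : ShiftedYangian A n p) {m : ℕ} (hm : m + 1 ≤ n - 1) (r s : ℕ) :
    ⁅PowerSeries.coeff (r+1) (shiftSeries (m:ℤ) (Y.dS (m+1))),
      PowerSeries.coeff s (shiftSeries (m:ℤ) (Y.fS (m+1)))⁆
    - ⁅PowerSeries.coeff r (shiftSeries (m:ℤ) (Y.dS (m+1))),
      PowerSeries.coeff (s+1) (shiftSeries (m:ℤ) (Y.fS (m+1)))⁆
    = (if s = 0 then PowerSeries.coeff r
          (shiftSeries (m:ℤ) (Y.fS (m+1)) * shiftSeries (m:ℤ) (Y.dS (m+1))) else 0)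
      - PowerSeries.coeff s (shiftSeries (m:ℤ) (Y.fS (m+1)))
        * PowerSeries.coeff r (shiftSeries (m:ℤ) (Y.dS (m+1))) := by
  have hD : ∀ x : ℕ, PowerSeries.coeff x (shiftSeries (m:ℤ) (Y.dS (m+1)))
      = ∑ a ∈ Finset.range (x+1), (kz (m:ℤ) x a : A) * Y.d (m+1) a := by
    intro x
    rw [coeff_shiftSeries]
    exact Finset.sum_congr rfl fun a _ => by rw [coeff_dS]
  have hF : ∀ y : ℕ, PowerSeries.coeff y (shiftSeries (m:ℤ) (Y.fS (m+1)))
      = ∑ b ∈ Finset.range (y+1), (kz (m:ℤ) y b : A) * Y.f (m+1) b := by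
    intro y
    rw [coeff_shiftSeries]
    exact Finset.sum_congr rfl fun b _ => by rw [coeff_fS]
  have hZ : ∀ a : ℕ, PowerSeries.coeff a (Y.fS (m+1) * Y.dS (m+1))
      = ∑ t ∈ Finset.range (a+1), Y.f (m+1) t * Y.d (m+1) (a-t) := by
    intro a
    rw [coeff_mul']
    exact Finset.sum_congr rfl fun t _ => by rw [coeff_fS, coeff_dS]
  have hmul : shiftSeries (m:ℤ) (Y.fS (m+1)) * shiftSeries (m:ℤ) (Y.dS (m+1))
      = shiftSeries (m:ℤ) (Y.fS (m+1) * Y.dS (m+1)) := (shiftSeries_mul _ _ _).symm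
  have hZ' : PowerSeries.coeff r
        (shiftSeries (m:ℤ) (Y.fS (m+1)) * shiftSeries (m:ℤ) (Y.dS (m+1)))
      = ∑ a ∈ Finset.range (r+1), (kz (m:ℤ) r a : A)
          * PowerSeries.coeff a (Y.fS (m+1) * Y.dS (m+1)) := by
    rw [hmul, coeff_shiftSeries]
  rw [hD, hD, hF, hF, hZ']
  have hK : ∀ a b : ℕ, ⁅Y.d (m+1) (a+1), Y.f (m+1) b⁆ - ⁅Y.d (m+1) a, Y.f (m+1) (b+1)⁆
      = (if b = 0 then PowerSeries.coeff a (Y.fS (m+1) * Y.dS (m+1)) else 0)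
        - Y.f (m+1) b * Y.d (m+1) a := by
    intro a b
    rw [hZ a]
    exact K0 Y hm a b
  exact shifted_rel (m:ℤ) (Y.d (m+1)) (Y.f (m+1))
    (fun a => PowerSeries.coeff a (Y.fS (m+1) * Y.dS (m+1)))
    (Y.d_zero (m+1)) (Y.f_zero (m+1)) hK r s

lemma coeff_zero_shiftD (Y : ShiftedYangian A n p) (k : ℕ) (c : ℤ) :
    PowerSeries.coeff 0 (shiftSeries c (Y.dS k)) = 1 := by
  rw [coeff_shiftSeries, Finset.sum_range_one, coeff_dS, Y.d_zero, kz_zero_left]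
  simp

lemma coeff_zero_shiftF (Y : ShiftedYangian A n p) (k : ℕ) (c : ℤ) :
    PowerSeries.coeff 0 (shiftSeries c (Y.fS k)) = 0 := by
  rw [coeff_shiftSeries, Finset.sum_range_one, coeff_fS, Y.f_zero]
  simp

lemma coeff_zero_aS (Y : ShiftedYangian A n p) (j : ℕ) :
    PowerSeries.coeff 0 (Y.aS j) = 1 := by
  induction j with
  | zero => rw [aS_zero]; simp
  | succ j ih =>
    rw [aS_succ, coeff_mul', Finset.sum_range_one, ih, one_mul, Nat.sub_zero,
      coeff_zero_shiftD]

lemma coeff_zero_cS (Y : ShiftedYangian A n p) (i : ℕ) :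
    PowerSeries.coeff 0 (Y.cS i) = 0 := by
  rw [ShiftedYangian.cS, coeff_mul', Finset.sum_range_one, coeff_zero_shiftF, zero_mul]

lemma coeff_aS_succ (Y : ShiftedYangian A n p) (m r : ℕ) :
    PowerSeries.coeff r (Y.aS (m+1))
      = ∑ t ∈ Finset.range (r+1), PowerSeries.coeff t (Y.aS m)
          * PowerSeries.coeff (r-t) (shiftSeries (m:ℤ) (Y.dS (m+1))) := by
  rw [aS_succ, coeff_mul']

lemma cS_eq (Y : ShiftedYangian A n p) {m : ℕ} (hm : m + 1 ≤ n - 1) :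
    Y.cS (m+1) = Y.aS m
      * (shiftSeries (m:ℤ) (Y.fS (m+1)) * shiftSeries (m:ℤ) (Y.dS (m+1))) := by
  have hcast : ((m+1 : ℕ) : ℤ) - 1 = (m : ℤ) := by push_cast; ring
  rw [ShiftedYangian.cS, hcast, aS_succ]
  have hcomm : shiftSeries (m:ℤ) (Y.fS (m+1)) * Y.aS m
      = Y.aS m * shiftSeries (m:ℤ) (Y.fS (m+1)) :=
    series_comm (fun a b => (commute_aS_Fsh Y hm b a).symm)
  rw [← mul_assoc, hcomm, mul_assoc]

lemma Krel (Y : ShiftedYangian A n p) {m : ℕ} (hm : m + 1 ≤ n - 1) (r s : ℕ) :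
    ⁅PowerSeries.coeff (r+1) (Y.aS (m+1)),
      PowerSeries.coeff s (shiftSeries (m:ℤ) (Y.fS (m+1)))⁆
    - ⁅PowerSeries.coeff r (Y.aS (m+1)),
      PowerSeries.coeff (s+1) (shiftSeries (m:ℤ) (Y.fS (m+1)))⁆
    = (if s = 0 then PowerSeries.coeff r (Y.cS (m+1)) else 0)
      - PowerSeries.coeff s (shiftSeries (m:ℤ) (Y.fS (m+1)))
        * PowerSeries.coeff r (Y.aS (m+1)) := by
  have expand : ∀ x y : ℕ,
      ⁅PowerSeries.coeff x (Y.aS (m+1)),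
        PowerSeries.coeff y (shiftSeries (m:ℤ) (Y.fS (m+1)))⁆
      = ∑ t ∈ Finset.range (x+1), PowerSeries.coeff t (Y.aS m)
          * ⁅PowerSeries.coeff (x-t) (shiftSeries (m:ℤ) (Y.dS (m+1))),
            PowerSeries.coeff y (shiftSeries (m:ℤ) (Y.fS (m+1)))⁆ := by
    intro x y
    rw [coeff_aS_succ, sum_lie']
    exact Finset.sum_congr rfl fun t _ => lie_mul_left (commute_aS_Fsh Y hm t y) _
  rw [expand, expand]
  rw [Finset.sum_range_succ (fun t => PowerSeries.coeff t (Y.aS m)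
    * ⁅PowerSeries.coeff (r+1-t) (shiftSeries (m:ℤ) (Y.dS (m+1))),
      PowerSeries.coeff s (shiftSeries (m:ℤ) (Y.fS (m+1)))⁆) (r+1)]
  have etop : r + 1 - (r+1) = 0 := by omega
  rw [etop, coeff_zero_shiftD, one_lie', mul_zero, add_zero]
  have e1 : ∀ t ∈ Finset.range (r+1),
      PowerSeries.coeff t (Y.aS m)
        * ⁅PowerSeries.coeff (r+1-t) (shiftSeries (m:ℤ) (Y.dS (m+1))),
          PowerSeries.coeff s (shiftSeries (m:ℤ) (Y.fS (m+1)))⁆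
      = PowerSeries.coeff t (Y.aS m)
        * ⁅PowerSeries.coeff ((r-t)+1) (shiftSeries (m:ℤ) (Y.dS (m+1))),
          PowerSeries.coeff s (shiftSeries (m:ℤ) (Y.fS (m+1)))⁆ := by
    intro t ht
    have : r + 1 - t = (r-t)+1 := by
      have := Finset.mem_range.mp ht
      omega
    rw [this]
  rw [Finset.sum_congr rfl e1, ← Finset.sum_sub_distrib]
  have e2 : ∀ t ∈ Finset.range (r+1),
      PowerSeries.coeff t (Y.aS m)
        * ⁅PowerSeries.coeff ((r-t)+1) (shiftSeries (m:ℤ) (Y.dS (m+1))),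
          PowerSeries.coeff s (shiftSeries (m:ℤ) (Y.fS (m+1)))⁆
      - PowerSeries.coeff t (Y.aS m)
        * ⁅PowerSeries.coeff (r-t) (shiftSeries (m:ℤ) (Y.dS (m+1))),
          PowerSeries.coeff (s+1) (shiftSeries (m:ℤ) (Y.fS (m+1)))⁆
      = PowerSeries.coeff t (Y.aS m)
          * (if s = 0 then PowerSeries.coeff (r-t)
              (shiftSeries (m:ℤ) (Y.fS (m+1)) * shiftSeries (m:ℤ) (Y.dS (m+1))) else 0)
        - PowerSeries.coeff t (Y.aS m)
          * (PowerSeries.coeff s (shiftSeries (m:ℤ) (Y.fS (m+1)))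
            * PowerSeries.coeff (r-t) (shiftSeries (m:ℤ) (Y.dS (m+1)))) := by
    intro t _
    rw [← mul_sub, Kprime Y hm (r-t) s, mul_sub]
  rw [Finset.sum_congr rfl e2, Finset.sum_sub_distrib]
  congr 1
  · split_ifs with hs
    · rw [cS_eq Y hm, coeff_mul']
    · simp
  · rw [coeff_aS_succ, Finset.mul_sum]
    refine Finset.sum_congr rfl fun t _ => ?_
    rw [← mul_assoc, ← mul_assoc, (commute_aS_Fsh Y hm t s).eq]

lemma mainN (Y : ShiftedYangian A n p) {m : ℕ} (hm : m + 1 ≤ n - 1) (r s : ℕ) :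
    ⁅PowerSeries.coeff (r+1) (Y.aS (m+1)), PowerSeries.coeff s (Y.cS (m+1))⁆
    - ⁅PowerSeries.coeff r (Y.aS (m+1)), PowerSeries.coeff (s+1) (Y.cS (m+1))⁆
    = PowerSeries.coeff r (Y.cS (m+1)) * PowerSeries.coeff s (Y.aS (m+1))
      - PowerSeries.coeff s (Y.cS (m+1)) * PowerSeries.coeff r (Y.aS (m+1)) := by
  have hcast : ((m+1 : ℕ) : ℤ) - 1 = (m : ℤ) := by push_cast; ring
  have hcS : Y.cS (m+1) = shiftSeries (m:ℤ) (Y.fS (m+1)) * Y.aS (m+1) := by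
    rw [ShiftedYangian.cS, hcast]
  have hc : ∀ y : ℕ, PowerSeries.coeff y (Y.cS (m+1))
      = ∑ t ∈ Finset.range (y+1),
          PowerSeries.coeff t (shiftSeries (m:ℤ) (Y.fS (m+1)))
            * PowerSeries.coeff (y-t) (Y.aS (m+1)) := by
    intro y
    rw [hcS, coeff_mul']
  have hcommA : ∀ (x y j j' : ℕ),
      Commute (PowerSeries.coeff x (Y.aS j)) (PowerSeries.coeff y (Y.aS j')) :=
    fun x y j j' => closure_commute Y (coeff_aS_mem_all Y j x) (coeff_aS_mem_all Y j' y)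
  have expand : ∀ x y : ℕ,
      ⁅PowerSeries.coeff x (Y.aS (m+1)), PowerSeries.coeff y (Y.cS (m+1))⁆
      = ∑ t ∈ Finset.range (y+1),
          ⁅PowerSeries.coeff x (Y.aS (m+1)),
            PowerSeries.coeff t (shiftSeries (m:ℤ) (Y.fS (m+1)))⁆
          * PowerSeries.coeff (y-t) (Y.aS (m+1)) := by
    intro x y
    rw [hc y, lie_sum']
    exact Finset.sum_congr rfl fun t _ => lie_mul_right (hcommA x (y-t) (m+1) (m+1)) _
  rw [expand, expand]
  rw [Finset.sum_range_succ' (fun t =>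
    ⁅PowerSeries.coeff r (Y.aS (m+1)),
      PowerSeries.coeff t (shiftSeries (m:ℤ) (Y.fS (m+1)))⁆
    * PowerSeries.coeff (s+1-t) (Y.aS (m+1))) (s+1)]
  rw [coeff_zero_shiftF, (show ∀ x : A, ⁅x, (0:A)⁆ = 0 from fun x => by simp [Ring.lie_def]), zero_mul, add_zero]
  have e1 : ∀ t ∈ Finset.range (s+1),
      ⁅PowerSeries.coeff r (Y.aS (m+1)),
        PowerSeries.coeff (t+1) (shiftSeries (m:ℤ) (Y.fS (m+1)))⁆
      * PowerSeries.coeff (s+1-(t+1)) (Y.aS (m+1))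
      = ⁅PowerSeries.coeff r (Y.aS (m+1)),
        PowerSeries.coeff (t+1) (shiftSeries (m:ℤ) (Y.fS (m+1)))⁆
      * PowerSeries.coeff (s-t) (Y.aS (m+1)) := by
    intro t _
    have : s + 1 - (t+1) = s - t := by omega
    rw [this]
  rw [Finset.sum_congr rfl e1, ← Finset.sum_sub_distrib]
  have e2 : ∀ t ∈ Finset.range (s+1),
      ⁅PowerSeries.coeff (r+1) (Y.aS (m+1)),
        PowerSeries.coeff t (shiftSeries (m:ℤ) (Y.fS (m+1)))⁆
      * PowerSeries.coeff (s-t) (Y.aS (m+1))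
      - ⁅PowerSeries.coeff r (Y.aS (m+1)),
        PowerSeries.coeff (t+1) (shiftSeries (m:ℤ) (Y.fS (m+1)))⁆
      * PowerSeries.coeff (s-t) (Y.aS (m+1))
      = (if t = 0 then PowerSeries.coeff r (Y.cS (m+1)) else 0)
          * PowerSeries.coeff (s-t) (Y.aS (m+1))
        - (PowerSeries.coeff t (shiftSeries (m:ℤ) (Y.fS (m+1)))
            * PowerSeries.coeff r (Y.aS (m+1)))
          * PowerSeries.coeff (s-t) (Y.aS (m+1)) := by
    intro t _
    rw [← sub_mul, Krel Y hm r t, sub_mul]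
  rw [Finset.sum_congr rfl e2, Finset.sum_sub_distrib]
  congr 1
  · rw [Finset.sum_eq_single_of_mem 0 (Finset.mem_range.mpr (by omega))
      (fun t _ ht => by rw [if_neg ht, zero_mul])]
    rw [if_pos rfl, Nat.sub_zero]
  · have e3 : ∀ t ∈ Finset.range (s+1),
        (PowerSeries.coeff t (shiftSeries (m:ℤ) (Y.fS (m+1)))
          * PowerSeries.coeff r (Y.aS (m+1)))
          * PowerSeries.coeff (s-t) (Y.aS (m+1))
        = (PowerSeries.coeff t (shiftSeries (m:ℤ) (Y.fS (m+1)))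
            * PowerSeries.coeff (s-t) (Y.aS (m+1)))
          * PowerSeries.coeff r (Y.aS (m+1)) := by
      intro t _
      rw [mul_assoc, mul_assoc, (hcommA r (s-t) (m+1) (m+1)).eq]
    rw [Finset.sum_congr rfl e3, ← Finset.sum_mul, ← hc s]

end YangAux

open ShiftedYangian in
/-- In the shifted Yangian `Y_π(gl_n)`:
`(u-v)[a_i(u), c_i(v)] = c_i(u) a_i(v) - c_i(v) a_i(u)`, interpreted coefficientwise
(the coefficient of `u⁻ʳ v⁻ˢ` for every pair of integers `r`, `s`). -/
theorem aS_cS_relation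
    {A : Type} [Ring A] {n : ℕ} {p : ℕ → ℕ}
    (hp : ∀ k, p k ≤ p (k+1)) (Y : ShiftedYangian A n p) :
    ∀ i : ℕ, 1 ≤ i → i ≤ n - 1 →
      ∀ r s : ℤ,
        ⁅zcoeff (r+1) (Y.aS i), zcoeff s (Y.cS i)⁆ -
          ⁅zcoeff r (Y.aS i), zcoeff (s+1) (Y.cS i)⁆ =
        zcoeff r (Y.cS i) * zcoeff s (Y.aS i) -
          zcoeff s (Y.cS i) * zcoeff r (Y.aS i) := by
  intro i hi1 hi2 r s
  obtain ⟨m, rfl⟩ : ∃ m, i = m + 1 := ⟨i - 1, by omega⟩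
  have hm : m + 1 ≤ n - 1 := hi2
  have zc_neg : ∀ (j : ℤ) (g : PowerSeries A), ¬ 0 ≤ j → zcoeff j g = 0 :=
    fun j g h => dif_neg h
  have zc_nat : ∀ (k : ℕ) (g : PowerSeries A),
      zcoeff (k : ℤ) g = PowerSeries.coeff k g := by
    intro k g
    rw [zcoeff, dif_pos (Int.natCast_nonneg k), Int.toNat_natCast]
  by_cases hr : 0 ≤ r
  · obtain ⟨r', rfl⟩ := Int.eq_ofNat_of_zero_le hr
    by_cases hs : 0 ≤ s
    · obtain ⟨s', rfl⟩ := Int.eq_ofNat_of_zero_le hs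
      have h1 : ((r' : ℤ) + 1) = ((r' + 1 : ℕ) : ℤ) := by push_cast; ring
      have h2 : ((s' : ℤ) + 1) = ((s' + 1 : ℕ) : ℤ) := by push_cast; ring
      simp only [h1, h2, zc_nat]
      exact YangAux.mainN Y hm r' s'
    · by_cases hs1 : s = -1
      · subst hs1
        have h0 : zcoeff (0:ℤ) (Y.cS (m+1)) = 0 := by
          rw [show (0:ℤ) = ((0:ℕ):ℤ) by norm_num, zc_nat, YangAux.coeff_zero_cS]
        have hneg : ∀ g : PowerSeries A, zcoeff (-1:ℤ) g = 0 :=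
          fun g => zc_neg _ _ (by norm_num)
        simp [h0, hneg, Ring.lie_def]
      · have ha : ∀ g : PowerSeries A, zcoeff s g = 0 := fun g => zc_neg _ _ (by omega)
        have hb : ∀ g : PowerSeries A, zcoeff (s+1) g = 0 := fun g => zc_neg _ _ (by omega)
        simp [ha, hb, Ring.lie_def]
  · by_cases hr1 : r = -1
    · subst hr1
      have h0 : zcoeff (0:ℤ) (Y.aS (m+1)) = 1 := by
        rw [show (0:ℤ) = ((0:ℕ):ℤ) by norm_num, zc_nat, YangAux.coeff_zero_aS]
      have hneg : ∀ g : PowerSeries A, zcoeff (-1:ℤ) g = 0 :=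
        fun g => zc_neg _ _ (by norm_num)
      simp [h0, hneg, YangAux.one_lie', Ring.lie_def]
    · have ha : ∀ g : PowerSeries A, zcoeff r g = 0 := fun g => zc_neg _ _ (by omega)
      have hb : ∀ g : PowerSeries A, zcoeff (r+1) g = 0 := fun g => zc_neg _ _ (by omega)
      simp [ha, hb, Ring.lie_def]
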